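/- Let h > 0 and k(0) > 0 be given. There exists a constant A > 0, depending only on h and k(0), with the following property: for every T > 0, every k, w ∈ C²([0,h]) with k > 0 on [0,h], k having the given value at 0, and w(0) = w(h) = 0, every F ∈ C([0,T]), every q₀ ∈ C¹([0,h]), and every classical solution q of the transport equation with flux F and initial data q₀, one has for all (z,t) ∈ [0,h]×(0,T]: |q(z,t)|² ≤ A ( ∫₀ʰ q₀(ζ)² dζ + ∫₀ʰ q_z(ζ,t)² dζ + t ∫₀ᵗ F(s)² ds ). -/

import Mathlib

open MeasureTheory Set Filter intervalIntegral

/-- A classical solution of the transport equation `q_t + (w q)_z = (k q_z)_z`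
on `[0,h] × (0,T]` with flux boundary condition `q_z(0,t) = -F(t)`,
no-flux upper boundary condition `q_z(h,t) = 0`, and initial data `q₀`,
together with its partial derivatives `qz`, `qzz`, `qt`. -/
structure ClassicalSolution (h T : ℝ) (k w F q₀ : ℝ → ℝ)
    (q qz qzz qt : ℝ → ℝ → ℝ) : Prop where
  cont : ContinuousOn (fun x : ℝ × ℝ => q x.1 x.2) (Icc 0 h ×ˢ Icc 0 T)
  hasDeriv_z : ∀ z ∈ Icc (0:ℝ) h, ∀ t ∈ Ioc (0:ℝ) T,
    HasDerivWithinAt (fun z' => q z' t) (qz z t) (Icc 0 h) z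
  hasDeriv_zz : ∀ z ∈ Icc (0:ℝ) h, ∀ t ∈ Ioc (0:ℝ) T,
    HasDerivWithinAt (fun z' => qz z' t) (qzz z t) (Icc 0 h) z
  hasDeriv_t : ∀ z ∈ Icc (0:ℝ) h, ∀ t ∈ Ioc (0:ℝ) T,
    HasDerivWithinAt (fun t' => q z t') (qt z t) (Icc 0 T) t
  cont_z : ContinuousOn (fun x : ℝ × ℝ => qz x.1 x.2) (Icc 0 h ×ˢ Ioc 0 T)
  cont_zz : ContinuousOn (fun x : ℝ × ℝ => qzz x.1 x.2) (Icc 0 h ×ˢ Ioc 0 T)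
  cont_t : ContinuousOn (fun x : ℝ × ℝ => qt x.1 x.2) (Icc 0 h ×ˢ Ioc 0 T)
  pde : ∀ z ∈ Icc (0:ℝ) h, ∀ t ∈ Ioc (0:ℝ) T,
    qt z t + (derivWithin w (Icc 0 h) z * q z t + w z * qz z t)
      = derivWithin k (Icc 0 h) z * qz z t + k z * qzz z t
  bc_lower : ∀ t ∈ Ioc (0:ℝ) T, qz 0 t = -F t
  bc_upper : ∀ t ∈ Ioc (0:ℝ) T, qz h t = 0
  ic : ∀ z ∈ Icc (0:ℝ) h, q z 0 = q₀ z

/-- `q` is a classical solution of the transport equation (partial derivatives exist). -/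
def IsClassicalSolution (h T : ℝ) (k w F q₀ : ℝ → ℝ) (q : ℝ → ℝ → ℝ) : Prop :=
  ∃ qz qzz qt, ClassicalSolution h T k w F q₀ q qz qzz qt

lemma cs_lemma {f : ℝ → ℝ} {a b : ℝ} (hab : a ≤ b) (hf : ContinuousOn f (Icc a b)) :
    (∫ x in a..b, f x) ^ 2 ≤ (b - a) * ∫ x in a..b, (f x) ^ 2 := by
  rcases eq_or_lt_of_le hab with rfl | hlt
  · simp
  · set L : ℝ := b - a with hL
    have hL0 : 0 < L := by simp [hL]; linarith
    set J : ℝ := ∫ x in a..b, f x with hJ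
    set c : ℝ := J / L with hc
    have hfi : IntervalIntegrable f volume a b :=
      (hf.mono (by rw [uIcc_of_le hab])).intervalIntegrable
    have hf2i : IntervalIntegrable (fun x => (f x) ^ 2) volume a b :=
      ((hf.pow 2).mono (by rw [uIcc_of_le hab])).intervalIntegrable
    have key : (0:ℝ) ≤ ∫ x in a..b, (f x - c) ^ 2 :=
      intervalIntegral.integral_nonneg hab (fun x _ => sq_nonneg _)
    have expand : (∫ x in a..b, (f x - c) ^ 2)
        = (∫ x in a..b, (f x) ^ 2) - 2 * c * J + c ^ 2 * L := by
      have : (fun x => (f x - c) ^ 2) = fun x => (f x) ^ 2 - (2 * c) * f x + c ^ 2 := by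
        funext x; ring
      rw [this, intervalIntegral.integral_add (hf2i.sub (hfi.const_mul _))
            (intervalIntegrable_const),
          intervalIntegral.integral_sub hf2i (hfi.const_mul _),
          intervalIntegral.integral_const_mul, intervalIntegral.integral_const]
      simp [hJ, hL]; ring
    rw [expand] at key
    have h2 : (0:ℝ) ≤ (∫ x in a..b, (f x) ^ 2) - J ^ 2 / L := by
      have hceq : 2 * c * J - c ^ 2 * L = J ^ 2 / L := by
        rw [hc]; field_simp; ring
      nlinarith [key, hceq]
    calc J ^ 2 = L * (J ^ 2 / L) := by field_simp
    _ ≤ L * ∫ x in a..b, (f x) ^ 2 := by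
        apply mul_le_mul_of_nonneg_left _ hL0.le; linarith

/-- Pointwise bound on the solution in terms of the initial data, the spatial
`L²` norm of `q_z`, and the flux, with a constant depending only on `h` and `k(0)`. -/
theorem pointwise_bound
    (h k0 : ℝ) (hh : 0 < h) (hk0 : 0 < k0) :
    ∃ A > (0:ℝ), ∀ (T : ℝ) (k w F q₀ : ℝ → ℝ) (q qz qzz qt : ℝ → ℝ → ℝ),
      0 < T →
      ContDiffOn ℝ 2 k (Icc 0 h) → ContDiffOn ℝ 2 w (Icc 0 h) →
      (∀ z ∈ Icc (0:ℝ) h, 0 < k z) → k 0 = k0 →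
      w 0 = 0 → w h = 0 →
      ContinuousOn F (Icc 0 T) → ContDiffOn ℝ 1 q₀ (Icc 0 h) →
      ClassicalSolution h T k w F q₀ q qz qzz qt →
      ∀ z ∈ Icc (0:ℝ) h, ∀ t ∈ Ioc (0:ℝ) T,
        (q z t) ^ 2 ≤ A * ((∫ ζ in (0:ℝ)..h, (q₀ ζ) ^ 2)
          + (∫ ζ in (0:ℝ)..h, (qz ζ t) ^ 2)
          + t * ∫ s in (0:ℝ)..t, (F s) ^ 2) := by
  refine ⟨4 / h + 4 * k0 ^ 2 / h ^ 2 + 2 * h, by positivity, ?_⟩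
  intro T k w F q₀ q qz qzz qt hT hk hw hkpos hk0eq hw0 hwh hF hq₀ sol z hz t ht
  set A : ℝ := 4 / h + 4 * k0 ^ 2 / h ^ 2 + 2 * h with hA
  have htT : t ≤ T := ht.2
  have ht0 : 0 < t := ht.1
  -- continuity of q(·, s) for s ∈ [0,T]
  have contq : ∀ s ∈ Icc (0:ℝ) T, ContinuousOn (fun y => q y s) (Icc 0 h) := by
    intro s hs y hy
    exact (sol.cont.comp (continuousOn_id.prodMk continuousOn_const)
      (fun x hx => mk_mem_prod hx hs)) y hy
  have contqz : ∀ s ∈ Ioc (0:ℝ) T, ContinuousOn (fun y => qz y s) (Icc 0 h) := by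
    intro s hs y hy
    exact (sol.cont_z.comp (continuousOn_id.prodMk continuousOn_const)
      (fun x hx => mk_mem_prod hx hs)) y hy
  have contqt : ∀ s ∈ Ioc (0:ℝ) T, ContinuousOn (fun y => qt y s) (Icc 0 h) := by
    intro s hs y hy
    exact (sol.cont_t.comp (continuousOn_id.prodMk continuousOn_const)
      (fun x hx => mk_mem_prod hx hs)) y hy
  set I : ℝ → ℝ := fun s => ∫ y in (0:ℝ)..h, q y s with hI
  -- Step 1: conservation
  -- global bound on |q|
  obtain ⟨M, hM⟩ := (isCompact_Icc.prod isCompact_Icc).exists_bound_of_continuousOn sol.cont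
  -- continuity of I on [0, t]
  have contI : ContinuousOn I (Icc 0 t) := by
    intro s₀ hs₀
    have hrw : I = fun s => ∫ y in Ioc (0:ℝ) h, q y s := by
      funext s; exact intervalIntegral.integral_of_le hh.le
    rw [hrw]
    apply MeasureTheory.continuousWithinAt_of_dominated (bound := fun _ => M)
    · apply Filter.eventually_of_mem self_mem_nhdsWithin
      intro x hx
      exact ((contq x (Icc_subset_Icc le_rfl htT hx)).mono
        Ioc_subset_Icc_self).aestronglyMeasurable measurableSet_Ioc
    · apply Filter.eventually_of_mem self_mem_nhdsWithin
      intro x hx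
      refine (MeasureTheory.ae_restrict_iff' measurableSet_Ioc).2
        (Filter.Eventually.of_forall fun y hy => ?_)
      exact hM (y, x) (mk_mem_prod (Ioc_subset_Icc_self hy) (Icc_subset_Icc le_rfl htT hx))
    · exact MeasureTheory.integrableOn_const measure_Ioc_lt_top.ne
    · refine (MeasureTheory.ae_restrict_iff' measurableSet_Ioc).2
        (Filter.Eventually.of_forall fun y hy => ?_)
      refine (sol.cont (y, s₀)
        (mk_mem_prod (Ioc_subset_Icc_self hy) (Icc_subset_Icc le_rfl htT hs₀))).comp
        ((continuous_const.prodMk continuous_id).continuousWithinAt) ?_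
      intro x hx
      exact mk_mem_prod (Ioc_subset_Icc_self hy) (Icc_subset_Icc le_rfl htT hx)
  -- derivative of I on (0, t)
  have derivI : ∀ s ∈ Ioo (0:ℝ) t, HasDerivAt I (k0 * F s) s := by
    intro s hs
    have hsltT : s < T := lt_of_lt_of_le hs.2 htT
    have hsT : s ∈ Ioc (0:ℝ) T := ⟨hs.1, hsltT.le⟩
    set ε : ℝ := min (s / 2) (T - s) with hε
    have hε0 : 0 < ε := lt_min (by linarith [hs.1]) (by linarith)
    have hball : ∀ x ∈ Metric.ball s ε, x ∈ Icc (s / 2) T ∧ x ∈ Ioo (0:ℝ) T := by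
      intro x hx
      rw [Metric.mem_ball, Real.dist_eq, abs_lt] at hx
      have h1 : ε ≤ s / 2 := min_le_left _ _
      have h2 : ε ≤ T - s := min_le_right _ _
      constructor
      · constructor <;> [linarith; linarith]
      · constructor <;> [linarith [hs.1]; linarith]
    -- bound on qt over a compact set
    obtain ⟨M', hM'⟩ := (isCompact_Icc.prod isCompact_Icc).exists_bound_of_continuousOn
      (sol.cont_t.mono (prod_mono (Subset.refl _)
        (fun x hx => ⟨lt_of_lt_of_le (by linarith [hs.1]) hx.1, hx.2⟩
          : Icc (s/2) T ⊆ Ioc 0 T)))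
    have main := (intervalIntegral.hasDerivAt_integral_of_dominated_loc_of_deriv_le
      (μ := volume) (F := fun x y => q y x) (F' := fun x y => qt y x) (x₀ := s) (a := 0) (b := h)
      (bound := fun _ => M') (Metric.ball_mem_nhds s hε0) ?_ ?_ ?_ ?_ ?_ ?_).2
    · -- value of the derivative
      have hval : (∫ y in (0:ℝ)..h, qt y s) = k0 * F s := by
        set G : ℝ → ℝ := fun y => k y * qz y s - w y * q y s with hG
        have hGd : ∀ y ∈ Icc (0:ℝ) h, HasDerivWithinAt G (qt y s) (Icc 0 h) y := by
          intro y hy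
          have hk' : HasDerivWithinAt k (derivWithin k (Icc 0 h) y) (Icc 0 h) y :=
            ((hk.differentiableOn (by norm_num)) y hy).hasDerivWithinAt
          have hw' : HasDerivWithinAt w (derivWithin w (Icc 0 h) y) (Icc 0 h) y :=
            ((hw.differentiableOn (by norm_num)) y hy).hasDerivWithinAt
          have h1 := (hk'.mul (sol.hasDeriv_zz y hy s hsT)).sub
            (hw'.mul (sol.hasDeriv_z y hy s hsT))
          refine HasDerivWithinAt.congr_deriv h1 ?_
          have := sol.pde y hy s hsT
          linarith
        have ftc : (∫ y in (0:ℝ)..h, qt y s) = G h - G 0 := by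
          apply intervalIntegral.integral_eq_sub_of_hasDeriv_right_of_le hh.le
          · exact fun y hy => (hGd y hy).continuousWithinAt
          · exact fun y hy => ((hGd y (Ioo_subset_Icc_self hy)).hasDerivAt
              (Icc_mem_nhds hy.1 hy.2)).hasDerivWithinAt
          · exact ((contqt s hsT).mono (by rw [uIcc_of_le hh.le])).intervalIntegrable
        rw [ftc, hG]
        simp only [sol.bc_upper s hsT, sol.bc_lower s hsT, hwh, hw0, hk0eq]
        ring
      rw [hval] at main
      exact main
    · -- measurability of q(·, x) near s
      apply Filter.eventually_of_mem (Metric.ball_mem_nhds s hε0)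
      intro x hx
      have hxT : x ∈ Icc (0:ℝ) T := Ioo_subset_Icc_self (hball x hx).2
      rw [uIoc_of_le hh.le]
      exact ((contq x hxT).mono Ioc_subset_Icc_self).aestronglyMeasurable measurableSet_Ioc
    · exact ((contq s ⟨hs.1.le, hsltT.le⟩).mono
        (by rw [uIcc_of_le hh.le])).intervalIntegrable
    · rw [uIoc_of_le hh.le]
      exact ((contqt s hsT).mono Ioc_subset_Icc_self).aestronglyMeasurable measurableSet_Ioc
    · apply Filter.Eventually.of_forall
      intro y hy x hx
      rw [uIoc_of_le hh.le] at hy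
      rw [Real.norm_eq_abs]
      exact hM' (y, x) (mk_mem_prod (Ioc_subset_Icc_self hy) (hball x hx).1)
    · exact intervalIntegrable_const
    · apply Filter.Eventually.of_forall
      intro y hy x hx
      rw [uIoc_of_le hh.le] at hy
      have hxO : x ∈ Ioo (0:ℝ) T := (hball x hx).2
      exact (sol.hasDeriv_t y (Ioc_subset_Icc_self hy) x ⟨hxO.1, hxO.2.le⟩).hasDerivAt
        (Icc_mem_nhds hxO.1 hxO.2)
  -- fundamental theorem of calculus in time
  have hFi : IntervalIntegrable (fun s => k0 * F s) volume 0 t :=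
    (((hF.mono (Icc_subset_Icc le_rfl htT)).mono
      (by rw [uIcc_of_le ht0.le])).intervalIntegrable).const_mul k0
  have ftcT : (∫ s in (0:ℝ)..t, k0 * F s) = I t - I 0 :=
    intervalIntegral.integral_eq_sub_of_hasDeriv_right_of_le ht0.le contI
      (fun s hs => (derivI s hs).hasDerivWithinAt) hFi
  have hI0 : I 0 = ∫ y in (0:ℝ)..h, q₀ y := by
    apply intervalIntegral.integral_congr
    intro y hy
    exact sol.ic y (by rwa [uIcc_of_le hh.le] at hy)
  have hconst : (∫ s in (0:ℝ)..t, k0 * F s) = k0 * ∫ s in (0:ℝ)..t, F s :=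
    intervalIntegral.integral_const_mul k0 F
  have conserve : I t = (∫ y in (0:ℝ)..h, q₀ y) + k0 * ∫ s in (0:ℝ)..t, F s := by
    rw [← hconst, ← hI0]; linarith [ftcT]
  -- Step 2a: pointwise deviation bound
  set J : ℝ := ∫ x in (0:ℝ)..h, |qz x t| with hJ
  have hqzint : IntervalIntegrable (fun x => qz x t) volume 0 h :=
    ((contqz t ht).mono (by rw [uIcc_of_le hh.le])).intervalIntegrable
  have htIcc : t ∈ Icc (0:ℝ) T := ⟨ht0.le, htT⟩
  have dev' : ∀ y ∈ Icc (0:ℝ) h, ∀ z' ∈ Icc (0:ℝ) h, y ≤ z' → |q z' t - q y t| ≤ J := by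
    intro y hy z' hz' hyz
    have ftc : ∫ x in y..z', qz x t = q z' t - q y t := by
      apply intervalIntegral.integral_eq_sub_of_hasDeriv_right_of_le hyz
      · exact (contq t htIcc).mono (Icc_subset_Icc hy.1 hz'.2)
      · intro x hx
        have hxI : x ∈ Icc (0:ℝ) h := ⟨le_trans hy.1 hx.1.le, le_trans hx.2.le hz'.2⟩
        exact ((sol.hasDeriv_z x hxI t ht).hasDerivAt
          (Icc_mem_nhds (lt_of_le_of_lt hy.1 hx.1) (lt_of_lt_of_le hx.2 hz'.2))).hasDerivWithinAt
      · exact hqzint.mono_set (by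
          rw [uIcc_of_le hyz, uIcc_of_le hh.le]; exact Icc_subset_Icc hy.1 hz'.2)
    rw [← ftc]
    calc |∫ x in y..z', qz x t| ≤ ∫ x in y..z', |qz x t| :=
        intervalIntegral.abs_integral_le_integral_abs hyz
    _ ≤ J := by
        apply intervalIntegral.integral_mono_interval hy.1 hyz hz'.2
        · exact Filter.Eventually.of_forall (fun x => abs_nonneg _)
        · exact hqzint.abs
  have dev : ∀ y ∈ Icc (0:ℝ) h, |q z t - q y t| ≤ J := by
    intro y hy
    rcases le_total y z with hyz | hzy
    · exact dev' y hy z hz hyz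
    · rw [abs_sub_comm]; exact dev' z hz y hy hzy
  have hqint : IntervalIntegrable (fun y => q y t) volume 0 h :=
    ((contq t htIcc).mono (by rw [uIcc_of_le hh.le])).intervalIntegrable
  have devh : |h * q z t - I t| ≤ J * h := by
    have hsub : ∫ y in (0:ℝ)..h, (q z t - q y t) = h * q z t - I t := by
      rw [intervalIntegral.integral_sub intervalIntegrable_const hqint,
        intervalIntegral.integral_const]
      simp [hI]
    rw [← hsub]
    have := intervalIntegral.norm_integral_le_of_norm_le_const
      (C := J) (f := fun y => q z t - q y t) (a := 0) (b := h) ?_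
    · simpa [Real.norm_eq_abs, abs_of_nonneg hh.le] using this
    · intro y hy
      rw [uIoc_of_le hh.le] at hy
      exact (Real.norm_eq_abs _) ▸ dev y (Ioc_subset_Icc_self hy)
  have hJ2 : J ^ 2 ≤ h * ∫ x in (0:ℝ)..h, (qz x t) ^ 2 := by
    have := cs_lemma (f := fun x => |qz x t|) hh.le (contqz t ht).abs
    simpa [sq_abs] using this
  have hI2 : (I t) ^ 2 ≤ 2 * h * (∫ ζ in (0:ℝ)..h, (q₀ ζ) ^ 2)
      + 2 * k0 ^ 2 * (t * ∫ s in (0:ℝ)..t, (F s) ^ 2) := by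
    rw [conserve]
    have hP2 : (∫ y in (0:ℝ)..h, q₀ y) ^ 2 ≤ h * ∫ ζ in (0:ℝ)..h, (q₀ ζ) ^ 2 := by
      simpa using cs_lemma hh.le (hq₀.continuousOn)
    have hQ2 : (∫ s in (0:ℝ)..t, F s) ^ 2 ≤ t * ∫ s in (0:ℝ)..t, (F s) ^ 2 := by
      simpa using cs_lemma ht0.le (hF.mono (Icc_subset_Icc le_rfl htT))
    nlinarith [hP2, hQ2, sq_nonneg ((∫ y in (0:ℝ)..h, q₀ y) - k0 * ∫ s in (0:ℝ)..t, F s),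
      mul_le_mul_of_nonneg_left hQ2 (by positivity : (0:ℝ) ≤ 2 * k0 ^ 2)]
  have E1 : (0:ℝ) ≤ ∫ ζ in (0:ℝ)..h, (q₀ ζ) ^ 2 :=
    intervalIntegral.integral_nonneg hh.le (fun x _ => sq_nonneg _)
  have E2 : (0:ℝ) ≤ ∫ ζ in (0:ℝ)..h, (qz ζ t) ^ 2 :=
    intervalIntegral.integral_nonneg hh.le (fun x _ => sq_nonneg _)
  have E3 : (0:ℝ) ≤ t * ∫ s in (0:ℝ)..t, (F s) ^ 2 :=
    mul_nonneg ht0.le (intervalIntegral.integral_nonneg ht0.le (fun x _ => sq_nonneg _))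
  have hh2 : (0:ℝ) < h ^ 2 := by positivity
  have habs2 : (h * q z t - I t) ^ 2 ≤ (J * h) ^ 2 := by
    rw [← sq_abs (h * q z t - I t)]
    exact pow_le_pow_left₀ (abs_nonneg _) devh 2
  refine le_of_mul_le_mul_left ?_ hh2
  calc h ^ 2 * (q z t) ^ 2
      ≤ (4 * h + 4 * k0 ^ 2 + 2 * h ^ 3) * ((∫ ζ in (0:ℝ)..h, (q₀ ζ) ^ 2)
          + (∫ ζ in (0:ℝ)..h, (qz ζ t) ^ 2)
          + t * ∫ s in (0:ℝ)..t, (F s) ^ 2) := by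
        nlinarith [habs2, hI2, mul_le_mul_of_nonneg_left hJ2 (by positivity : (0:ℝ) ≤ 2 * h ^ 2),
          sq_nonneg (h * q z t - 2 * I t),
          mul_nonneg (by positivity : (0:ℝ) ≤ k0 ^ 2) E1,
          mul_nonneg (by positivity : (0:ℝ) ≤ h ^ 3) E1,
          mul_nonneg hh.le E2,
          mul_nonneg (by positivity : (0:ℝ) ≤ k0 ^ 2) E2,
          mul_nonneg hh.le E3,
          mul_nonneg (by positivity : (0:ℝ) ≤ h ^ 3) E3]
    _ = h ^ 2 * (A * ((∫ ζ in (0:ℝ)..h, (q₀ ζ) ^ 2)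
          + (∫ ζ in (0:ℝ)..h, (qz ζ t) ^ 2)
          + t * ∫ s in (0:ℝ)..t, (F s) ^ 2)) := by
        rw [hA]; field_simp
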